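/- (Big-cell Bruhat decomposition of an upper unipotent element.) Let x, y ∈ E with y ≠ 0 and x·x̄ + y + ȳ = 0. Then n(x, y) = n'(−x̄·y⁻¹, y⁻¹) · h(y) · β · n'(−x̄·(ȳ)⁻¹, y⁻¹). -/

import Mathlib

open Matrix

/-- Big-cell Bruhat decomposition of an upper unipotent element: if `y ≠ 0` and
`x·σ(x) + y + σ(y) = 0`, then
`n(x, y) = n'(-σ(x)·y⁻¹, y⁻¹) · h(y) · β · n'(-σ(x)·σ(y)⁻¹, y⁻¹)`,
where `n(x,y) = [[1, x, y], [0, 1, -σ x], [0, 0, 1]]`,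
`n'(x,y) = [[1, 0, 0], [x, 1, 0], [y, -σ x, 1]]`,
`h(t) = diag(t, -σ(t)·t⁻¹, σ(t)⁻¹)` and `β` is the antidiagonal matrix of 1's. -/
theorem upper_unipotent_bruhat {E : Type*} [Field E] (σ : E ≃+* E)
    (hσ : ∀ a : E, σ (σ a) = a) (x y : E) (hy : y ≠ 0) (hxy : x * σ x + y + σ y = 0) :
    (!![1, x, y; 0, 1, -σ x; 0, 0, 1] : Matrix (Fin 3) (Fin 3) E) =
      !![1, 0, 0; -σ x * y⁻¹, 1, 0; y⁻¹, -σ (-σ x * y⁻¹), 1] *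
        diagonal ![y, -σ y * y⁻¹, (σ y)⁻¹] *
        !![0, 0, 1; 0, 1, 0; 1, 0, 0] *
        !![1, 0, 0; -σ x * (σ y)⁻¹, 1, 0; y⁻¹, -σ (-σ x * (σ y)⁻¹), 1] := by
  have hy' : σ y ≠ 0 := fun h => hy (by rw [← hσ y, h, map_zero])
  have hd : (diagonal ![y, -σ y * y⁻¹, (σ y)⁻¹] : Matrix (Fin 3) (Fin 3) E)
      = !![y, 0, 0; 0, -σ y * y⁻¹, 0; 0, 0, (σ y)⁻¹] := by
    ext i j; fin_cases i <;> fin_cases j <;>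
      simp [diagonal, vecHead, vecTail]
  rw [hd, Matrix.mul_fin_three, Matrix.mul_fin_three, Matrix.mul_fin_three]
  simp only [_root_.map_mul, map_neg, map_inv₀, hσ, neg_neg]
  ext i j
  fin_cases i <;> fin_cases j <;> simp [vecHead, vecTail] <;> field_simp <;>
    first
    | linear_combination (σ y) * hxy
    | linear_combination (y - σ y) * hxy
    | linear_combination (-y - σ y) * hxy
    | linear_combination y * hxy
    | linear_combination (y + σ y) * hxy
    | linear_combination (y * σ y) * hxy
    | linear_combination (-y * σ y) * hxy
    | linear_combination (-y - y * σ y) * hxy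
    | linear_combination (-y) * hxy
    | linear_combination hxy
    | linear_combination (-1 : E) * hxy
    | ring
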